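/- Let d ≥ 1, let f : ℝᵈ → ℝ be a Schwartz function, let β : ℝᵈ → ℝ be continuously differentiable with compact support, and define n_β = ∫ β f dv, p_β = ∫ v β f dv, E_β = ∫ |v|² β f dv, A_β = −∫ β ∇f dv, B_β = −∫ β (v·∇f) dv. Assume n_β ≠ 0, n_β·B_β − A_β·p_β ≠ 0, and λ_β := (n_β·E_β − |p_β|²)/(n_β·B_β − A_β·p_β) ≠ 0, and set u_β = (p_β − λ_β·A_β)/n_β. Then the penalization operator L_β(f)(v) = div_v(β(v)·[∇f(v) + ((v − u_β)/λ_β)·f(v)]) satisfies ∫ v·L_β(f)(v) dv = 0 (componentwise) and ∫ |v|²·L_β(f)(v) dv = 0. -/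

import Mathlib

open MeasureTheory
open scoped RealInnerProductSpace

variable {d : ℕ}

private lemma trace_clm (T : EuclideanSpace ℝ (Fin d) →L[ℝ] EuclideanSpace ℝ (Fin d)) :
    LinearMap.trace ℝ (EuclideanSpace ℝ (Fin d)) T.toLinearMap
      = ∑ i : Fin d, T (EuclideanSpace.single i 1) i := by
  rw [LinearMap.trace_eq_matrix_trace ℝ ((EuclideanSpace.basisFun (Fin d) ℝ).toBasis)]
  simp [Matrix.trace, LinearMap.toMatrix_apply, Matrix.diag,
    EuclideanSpace.basisFun_apply]

private lemma ibp (φ g : EuclideanSpace ℝ (Fin d) → ℝ) (hφ : ContDiff ℝ 1 φ)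
    (hg : ContDiff ℝ 1 g) (hgs : HasCompactSupport g) (w : EuclideanSpace ℝ (Fin d)) :
    ∫ v, φ v * fderiv ℝ g v w = -∫ v, fderiv ℝ φ v w * g v := by
  have hc1 : Continuous fun v => fderiv ℝ g v w :=
    (hg.continuous_fderiv one_ne_zero).clm_apply continuous_const
  have hc2 : Continuous fun v => fderiv ℝ φ v w :=
    (hφ.continuous_fderiv one_ne_zero).clm_apply continuous_const
  apply integral_mul_fderiv_eq_neg_fderiv_mul_of_integrable
  · exact (hc2.mul (hg.continuous)).integrable_of_hasCompactSupport hgs.mul_left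
  · exact (hφ.continuous.mul hc1).integrable_of_hasCompactSupport
      ((hgs.fderiv_apply ℝ w).mul_left)
  · exact (hφ.continuous.mul hg.continuous).integrable_of_hasCompactSupport hgs.mul_left
  · exact fun x _ => hφ.differentiable one_ne_zero x
  · exact fun x _ => hg.differentiable one_ne_zero x

set_option maxHeartbeats 1000000 in
theorem stmt16 (d : ℕ) (hd : 1 ≤ d)
    (f : SchwartzMap (EuclideanSpace ℝ (Fin d)) ℝ)
    (β : EuclideanSpace ℝ (Fin d) → ℝ)
    (hβ : ContDiff ℝ 1 β) (hβs : HasCompactSupport β)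
    (nβ Eβ Bβ : ℝ) (Aβ pβ : EuclideanSpace ℝ (Fin d))
    (hn : nβ = ∫ v, β v * f v)
    (hp : pβ = ∫ v, (β v * f v) • v)
    (hE : Eβ = ∫ v, ‖v‖ ^ 2 * (β v * f v))
    (hA : Aβ = -∫ v, β v • gradient (⇑f) v)
    (hB : Bβ = -∫ v, β v * ⟪v, gradient (⇑f) v⟫)
    (hn0 : nβ ≠ 0) (hden : nβ * Bβ - ⟪Aβ, pβ⟫ ≠ 0)
    (lβ : ℝ) (hl : lβ = (nβ * Eβ - ‖pβ‖ ^ 2) / (nβ * Bβ - ⟪Aβ, pβ⟫))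
    (hl0 : lβ ≠ 0)
    (uβ : EuclideanSpace ℝ (Fin d)) (hu : uβ = (1 / nβ) • (pβ - lβ • Aβ))
    (F : EuclideanSpace ℝ (Fin d) → EuclideanSpace ℝ (Fin d))
    (hF : ∀ v, F v = β v • (gradient (⇑f) v + lβ⁻¹ • (f v • (v - uβ))))
    (L : EuclideanSpace ℝ (Fin d) → ℝ)
    (hL : ∀ v, L v = LinearMap.trace ℝ (EuclideanSpace ℝ (Fin d))
      (fderiv ℝ F v).toLinearMap) :
    (∫ v, L v • v) = 0 ∧ (∫ v, ‖v‖ ^ 2 * L v) = 0 := by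
  have hFeq : F = fun v => β v • (gradient (⇑f) v + lβ⁻¹ • (f v • (v - uβ))) := funext hF
  -- smoothness of the gradient
  have hGc : ContDiff ℝ 1 (gradient (⇑f)) := by
    have h1 : ContDiff ℝ 1 (fderiv ℝ ⇑f) :=
      (f.smooth 2).fderiv_right (by norm_num)
    exact (InnerProductSpace.toDual ℝ (EuclideanSpace ℝ (Fin d))).symm.contDiff.comp h1
  have hFc : ContDiff ℝ 1 F := by
    rw [hFeq]
    exact hβ.smul (hGc.add ((contDiff_const (c := lβ⁻¹)).smul
      ((show ContDiff ℝ 1 ⇑f by exact_mod_cast f.smooth 1).smul (contDiff_id.sub (contDiff_const (c := uβ))))))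
  have hFs : HasCompactSupport F := by
    rw [hFeq]; exact hβs.smul_right
  -- coordinate functions
  have hFic : ∀ i : Fin d, ContDiff ℝ 1 (fun v => F v i) := fun i => by
    simpa [Function.comp_def] using ((EuclideanSpace.proj i (𝕜 := ℝ)).contDiff).comp hFc
  have hFis : ∀ i : Fin d, HasCompactSupport (fun v => F v i) := fun i => by
    simpa [Function.comp_def] using
      hFs.comp_left (g := fun x : EuclideanSpace ℝ (Fin d) => x i) rfl
  have hfd : ∀ (i : Fin d) v, fderiv ℝ (fun w => F w i) v
      = (EuclideanSpace.proj i (𝕜 := ℝ)).comp (fderiv ℝ F v) := by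
    intro i v
    have h : HasFDerivAt (fun w => F w i)
        ((EuclideanSpace.proj i (𝕜 := ℝ)).comp (fderiv ℝ F v)) v :=
      ((EuclideanSpace.proj i (𝕜 := ℝ)).hasFDerivAt).comp v
        (hFc.differentiable one_ne_zero v).hasFDerivAt
    exact h.fderiv
  have hLsum : ∀ v, L v = ∑ i : Fin d,
      fderiv ℝ (fun w => F w i) v (EuclideanSpace.single i 1) := by
    intro v
    rw [hL v, trace_clm]
    exact Finset.sum_congr rfl fun i _ => by rw [hfd i v]; rfl
  -- continuity and compact support of L
  have trace_cont : Continuous (fun T : EuclideanSpace ℝ (Fin d) →L[ℝ] EuclideanSpace ℝ (Fin d)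
      => LinearMap.trace ℝ (EuclideanSpace ℝ (Fin d)) T.toLinearMap) :=
    LinearMap.continuous_of_finiteDimensional
      ((LinearMap.trace ℝ (EuclideanSpace ℝ (Fin d))).comp (ContinuousLinearMap.coeLM ℝ))
  have hLcont : Continuous L := by
    rw [funext hL]
    exact trace_cont.comp (hFc.continuous_fderiv one_ne_zero)
  have hLs : HasCompactSupport L := by
    rw [funext hL]
    exact (hFs.fderiv ℝ).comp_left
      (g := fun T : EuclideanSpace ℝ (Fin d) →L[ℝ] EuclideanSpace ℝ (Fin d)
        => LinearMap.trace ℝ (EuclideanSpace ℝ (Fin d)) T.toLinearMap) (by simp)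
  -- basic integrability facts
  have cβ := hβ.continuous
  have cG := hGc.continuous
  have int_bf : Integrable (fun v => β v * f v) :=
    (cβ.mul f.continuous).integrable_of_hasCompactSupport hβs.mul_right
  have int_bfv : Integrable (fun v => (β v * f v) • v) :=
    ((cβ.mul f.continuous).smul continuous_id).integrable_of_hasCompactSupport
      (hβs.mul_right.smul_right)
  have int_bG : Integrable (fun v => β v • gradient (⇑f) v) :=
    (cβ.smul cG).integrable_of_hasCompactSupport hβs.smul_right
  have int_F : Integrable F := hFc.continuous.integrable_of_hasCompactSupport hFs
  have hAeq : (∫ v, β v • gradient (⇑f) v) = -Aβ := by rw [hA, neg_neg]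
  -- first key identity : ∫ F = 0
  have key1 : (∫ v, F v) = (0 : EuclideanSpace ℝ (Fin d)) := by
    have hptw : ∀ v, F v = β v • gradient (⇑f) v + lβ⁻¹ • ((β v * f v) • v)
        - lβ⁻¹ • ((β v * f v) • uβ) := by
      intro v
      rw [hF v]
      module
    have int2 : Integrable (fun v => lβ⁻¹ • ((β v * f v) • v)) := int_bfv.smul lβ⁻¹
    have int3 : Integrable (fun v => lβ⁻¹ • ((β v * f v) • uβ)) :=
      (int_bf.smul_const uβ).smul lβ⁻¹
    have int12 : Integrable (fun v => β v • gradient (⇑f) v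
        + lβ⁻¹ • ((β v * f v) • v)) := int_bG.add int2
    have hnu : nβ • uβ = pβ - lβ • Aβ := by
      rw [hu, smul_smul, mul_one_div, div_self hn0, one_smul]
    calc (∫ v, F v) = ∫ v, (β v • gradient (⇑f) v + lβ⁻¹ • ((β v * f v) • v)
          - lβ⁻¹ • ((β v * f v) • uβ)) :=
          integral_congr_ae (Filter.Eventually.of_forall hptw)
      _ = (∫ v, β v • gradient (⇑f) v) + lβ⁻¹ • (∫ v, (β v * f v) • v)
          - lβ⁻¹ • ((∫ v, β v * f v) • uβ) := by
          rw [integral_sub int12 int3, integral_add int_bG int2,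
            integral_smul, integral_smul, integral_smul_const]
      _ = 0 := by
          rw [hAeq, ← hp, ← hn, hnu, smul_sub, smul_smul, inv_mul_cancel₀ hl0, one_smul]
          abel
  -- second key identity : ∫ ⟪v, F v⟫ = 0
  have key2 : (∫ v, ⟪v, F v⟫) = 0 := by
    have hptw : ∀ v, ⟪v, F v⟫ = β v * ⟪v, gradient (⇑f) v⟫
        + lβ⁻¹ * (‖v‖ ^ 2 * (β v * f v)) - lβ⁻¹ * ⟪uβ, (β v * f v) • v⟫ := by
      intro v
      rw [hF v]
      simp only [real_inner_smul_right, inner_add_right, inner_sub_right,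
        real_inner_self_eq_norm_sq, real_inner_comm v uβ]
      ring
    have int_bvG : Integrable (fun v => β v * ⟪v, gradient (⇑f) v⟫) :=
      (cβ.mul (continuous_id.inner cG)).integrable_of_hasCompactSupport hβs.mul_right
    have int_nsq : Integrable (fun v => lβ⁻¹ * (‖v‖ ^ 2 * (β v * f v))) :=
      ((((continuous_norm.pow 2).mul (cβ.mul f.continuous))).integrable_of_hasCompactSupport
        (hβs.mul_right.mul_left)).const_mul lβ⁻¹
    have int_inner : Integrable (fun v => lβ⁻¹ * ⟪uβ, (β v * f v) • v⟫) :=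
      ((innerSL ℝ uβ).integrable_comp int_bfv).const_mul lβ⁻¹
    have int12 : Integrable (fun v => β v * ⟪v, gradient (⇑f) v⟫
        + lβ⁻¹ * (‖v‖ ^ 2 * (β v * f v))) := int_bvG.add int_nsq
    have hBeq : (∫ v, β v * ⟪v, gradient (⇑f) v⟫) = -Bβ := by rw [hB, neg_neg]
    have h3 : (∫ v, ⟪uβ, (β v * f v) • v⟫) = ⟪uβ, pβ⟫ := by
      rw [hp]
      exact ((innerSL ℝ uβ).integral_comp_comm int_bfv)
    calc (∫ v, ⟪v, F v⟫) = ∫ v, (β v * ⟪v, gradient (⇑f) v⟫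
          + lβ⁻¹ * (‖v‖ ^ 2 * (β v * f v)) - lβ⁻¹ * ⟪uβ, (β v * f v) • v⟫) :=
          integral_congr_ae (Filter.Eventually.of_forall hptw)
      _ = (∫ v, β v * ⟪v, gradient (⇑f) v⟫) + lβ⁻¹ * (∫ v, ‖v‖ ^ 2 * (β v * f v))
          - lβ⁻¹ * (∫ v, ⟪uβ, (β v * f v) • v⟫) := by
          rw [integral_sub int12 int_inner,
            integral_add int_bvG int_nsq, integral_const_mul, integral_const_mul]
      _ = -Bβ + lβ⁻¹ * Eβ - lβ⁻¹ * ⟪uβ, pβ⟫ := by rw [hBeq, ← hE, h3]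
      _ = 0 := by
          have hip : ⟪uβ, pβ⟫ = (1 / nβ) * (‖pβ‖ ^ 2 - lβ * ⟪Aβ, pβ⟫) := by
            rw [hu, real_inner_smul_left, inner_sub_left, real_inner_smul_left,
              real_inner_self_eq_norm_sq]
          have hlm : lβ * (nβ * Bβ - ⟪Aβ, pβ⟫) = nβ * Eβ - ‖pβ‖ ^ 2 := by
            rw [hl, div_mul_cancel₀ _ hden]
          rw [hip]
          set q : ℝ := ⟪Aβ, pβ⟫ with hq
          field_simp
          linear_combination (-1 : ℝ) * hlm
  -- continuity of the coordinate fderivs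
  have fd_cont : ∀ i : Fin d, Continuous fun v =>
      fderiv ℝ (fun w => F w i) v (EuclideanSpace.single i 1) :=
    fun i => ((hFic i).continuous_fderiv one_ne_zero).clm_apply continuous_const
  constructor
  · -- first moment
    have int_Lv : Integrable (fun v => L v • v) :=
      (hLcont.smul continuous_id).integrable_of_hasCompactSupport hLs.smul_right
    have comp1 : ∀ j : Fin d, (∫ v, L v * v j) = 0 := by
      intro j
      have hφj : ContDiff ℝ 1 (fun v : EuclideanSpace ℝ (Fin d) => v j) :=
        (EuclideanSpace.proj j (𝕜 := ℝ)).contDiff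
      have int_each : ∀ i ∈ Finset.univ, Integrable (fun v => v j *
          fderiv ℝ (fun w => F w i) v (EuclideanSpace.single i 1)) := fun i _ =>
        (((EuclideanSpace.proj j (𝕜 := ℝ)).continuous.mul
          (fd_cont i))).integrable_of_hasCompactSupport
          (((hFis i).fderiv_apply ℝ (EuclideanSpace.single i 1)).mul_left)
      have e1 : (fun v : EuclideanSpace ℝ (Fin d) => L v * v j)
          = fun v => ∑ i : Fin d, v j * fderiv ℝ (fun w => F w i) v
              (EuclideanSpace.single i 1) := by
        funext v
        rw [hLsum v, Finset.sum_mul]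
        exact Finset.sum_congr rfl fun i _ => mul_comm _ _
      have step2 : ∀ i : Fin d, (∫ v, (v j) * fderiv ℝ (fun w => F w i) v
          (EuclideanSpace.single i 1))
          = -(if i = j then (∫ v, F v i) else 0) := by
        intro i
        rw [ibp (fun v => v j) (fun v => F v i) hφj (hFic i) (hFis i)
          (EuclideanSpace.single i 1)]
        have hfd' : ∀ v, fderiv ℝ (fun v : EuclideanSpace ℝ (Fin d) => v j) v
            (EuclideanSpace.single i 1) = if i = j then (1:ℝ) else 0 := by
          intro v
          have : fderiv ℝ (fun v : EuclideanSpace ℝ (Fin d) => v j) v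
              = EuclideanSpace.proj j (𝕜 := ℝ) :=
            (EuclideanSpace.proj j (𝕜 := ℝ)).fderiv
          rw [this]
          by_cases h : i = j
          · subst h; simp [EuclideanSpace.single_apply]
          · simp [EuclideanSpace.single_apply, h, Ne.symm h]
        simp_rw [hfd']
        by_cases h : i = j
        · subst h; simp
        · simp [h]
      rw [e1, integral_finset_sum _ int_each]
      rw [Finset.sum_congr rfl fun i _ => step2 i]
      have hFj : (∫ v, F v j) = 0 := by
        have h1 := (EuclideanSpace.proj j (𝕜 := ℝ)).integral_comp_comm int_F
        rw [show (fun v => (EuclideanSpace.proj j (𝕜 := ℝ)) (F v)) = fun v => F v j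
          from rfl, key1, map_zero] at h1
        exact h1
      simp [Finset.sum_ite_eq', hFj]
    refine PiLp.ext fun j => ?_
    have h1 := (EuclideanSpace.proj j (𝕜 := ℝ)).integral_comp_comm int_Lv
    rw [show (fun v => (EuclideanSpace.proj j (𝕜 := ℝ)) (L v • v)) = fun v => L v * v j
      from rfl, comp1 j] at h1
    have h3 : (∫ v, L v • v) j = (EuclideanSpace.proj j (𝕜 := ℝ)) (∫ v, L v • v) := rfl
    rw [h3, ← h1]
    simp
  · -- second moment
    have int_each : ∀ i ∈ Finset.univ, Integrable (fun v => ‖v‖ ^ 2 *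
        fderiv ℝ (fun w => F w i) v (EuclideanSpace.single i 1)) := fun i _ =>
      (((continuous_norm.pow 2).mul (fd_cont i))).integrable_of_hasCompactSupport
        (((hFis i).fderiv_apply ℝ (EuclideanSpace.single i 1)).mul_left)
    have int_each2 : ∀ i ∈ Finset.univ, Integrable
        (fun v : EuclideanSpace ℝ (Fin d) => 2 * v i * F v i) := fun i _ =>
      ((continuous_const.mul (EuclideanSpace.proj i (𝕜 := ℝ)).continuous).mul
        ((hFic i).continuous)).integrable_of_hasCompactSupport ((hFis i).mul_left)
    have e1 : (fun v : EuclideanSpace ℝ (Fin d) => ‖v‖ ^ 2 * L v)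
        = fun v => ∑ i : Fin d, ‖v‖ ^ 2 * fderiv ℝ (fun w => F w i) v
            (EuclideanSpace.single i 1) := by
      funext v
      rw [hLsum v, Finset.mul_sum]
    have step2 : ∀ i : Fin d, (∫ v, ‖v‖ ^ 2 * fderiv ℝ (fun w => F w i) v
        (EuclideanSpace.single i 1)) = -∫ v, 2 * v i * F v i := by
      intro i
      rw [ibp (fun v : EuclideanSpace ℝ (Fin d) => ‖v‖ ^ 2) (fun v => F v i)
        (contDiff_norm_sq ℝ) (hFic i) (hFis i) (EuclideanSpace.single i 1)]
      have hfd' : ∀ v : EuclideanSpace ℝ (Fin d),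
          fderiv ℝ (fun v : EuclideanSpace ℝ (Fin d) => ‖v‖ ^ 2) v
          (EuclideanSpace.single i 1) = 2 * v i := by
        intro v
        rw [(hasStrictFDerivAt_norm_sq v).hasFDerivAt.fderiv,
          ContinuousLinearMap.smul_apply, innerSL_apply_apply,
          EuclideanSpace.inner_single_right]
        simp [two_smul]
        ring
      simp_rw [hfd']
    have ptsum : ∀ v : EuclideanSpace ℝ (Fin d),
        (∑ i : Fin d, 2 * v i * F v i) = 2 * ⟪v, F v⟫ := by
      intro v
      rw [PiLp.inner_apply]
      simp only [RCLike.inner_apply, conj_trivial]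
      rw [Finset.mul_sum]
      exact Finset.sum_congr rfl fun i _ => by ring
    rw [e1, integral_finset_sum _ int_each,
      Finset.sum_congr rfl fun i _ => step2 i, Finset.sum_neg_distrib,
      ← integral_finset_sum _ int_each2]
    simp_rw [ptsum]
    rw [integral_const_mul, key2]
    simp
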